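/- Let R be a G-graded commutative ring that is a crossed product over its support (i.e., every nonzero component R_σ contains a unit of R), and suppose R_e is an EM-ring. Then R is an EM-G-graded ring. -/

import Mathlib

open Polynomial

/-- `R` (with grading `𝒜`) is an EM-`G`-graded ring: every nonzero homogeneous
zero-divisor polynomial in `R[x]` has an annihilating content. -/
def IsEMGGraded {G R : Type*} [CommRing R] (𝒜 : G → AddSubgroup R) : Prop :=
  ∀ f : R[X], f ≠ 0 → (∃ σ : G, ∀ i, f.coeff i ∈ 𝒜 σ) → f ∉ nonZeroDivisors R[X] →
    ∃ (c : R) (g : R[X]), c ∉ nonZeroDivisors R ∧ g ∈ nonZeroDivisors R[X] ∧ f = C c * g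

/-- The subring of `R` whose carrier is the set `A` is an EM-ring (identifying `A[x]` with
the polynomials over `R` with all coefficients in `A`). -/
def IsEMSubring {R : Type*} [CommRing R] (A : Set R) : Prop :=
  ∀ f : R[X], (∀ i, f.coeff i ∈ A) →
    (∃ p : R[X], p ≠ 0 ∧ (∀ i, p.coeff i ∈ A) ∧ p * f = 0) →
    ∃ (c : R) (g : R[X]), c ∈ A ∧ (∀ i, g.coeff i ∈ A) ∧
      (∃ d ∈ A, d ≠ 0 ∧ c * d = 0) ∧
      (∀ p : R[X], (∀ i, p.coeff i ∈ A) → p * g = 0 → p = 0) ∧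
      f = C c * g

/-- The inverse of a homogeneous unit of degree `σ` is homogeneous of degree `-σ`. -/
lemma inv_mem_neg_of_graded {G R : Type*} [AddGroup G] [DecidableEq G] [CommRing R]
    (𝒜 : G → AddSubgroup R) [GradedRing 𝒜] {σ : G} {u v : R}
    (hu : u ∈ 𝒜 σ) (huv : u * v = 1) : v ∈ 𝒜 (-σ) := by
  classical
  have hunit : ∀ x : R, u * x = 0 → x = 0 := by
    intro x hx
    have := congrArg (· * x) huv
    simp only [one_mul] at this
    calc x = u * v * x := this.symm
    _ = v * (u * x) := by ring
    _ = 0 := by rw [hx, mul_zero]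
  have hzero : ∀ τ : G, τ ≠ -σ → (DirectSum.decompose 𝒜 v τ : R) = 0 := by
    intro τ hτ
    have h1 : (DirectSum.decompose 𝒜 (u * v) (σ + τ) : R)
        = u * (DirectSum.decompose 𝒜 v τ : R) :=
      DirectSum.coe_decompose_mul_add_of_left_mem 𝒜 hu
    rw [huv] at h1
    have hne : σ + τ ≠ 0 := fun h => hτ (eq_neg_of_add_eq_zero_right h)
    have h2 : (DirectSum.decompose 𝒜 (1 : R) (σ + τ) : R) = 0 :=
      DirectSum.decompose_of_mem_ne 𝒜 (SetLike.one_mem_graded 𝒜) hne.symm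
    rw [h2] at h1
    exact hunit _ h1.symm
  have hv := DirectSum.sum_support_decompose 𝒜 v
  rw [← hv]
  apply AddSubgroup.sum_mem
  intro i hi
  by_cases h : i = -σ
  · subst h; exact (DirectSum.decompose 𝒜 v (-σ)).2
  · rw [hzero i h]; exact (𝒜 (-σ)).zero_mem

/-- If `r • q = 0` for a polynomial `q` with all coefficients in `𝒜 0`, then each
homogeneous component of `r` also annihilates `q`. -/
lemma component_annihilates {G R : Type*} [AddGroup G] [DecidableEq G] [CommRing R]
    (𝒜 : G → AddSubgroup R) [GradedRing 𝒜] {r : R} {q : R[X]}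
    (hq : ∀ i, q.coeff i ∈ 𝒜 (0 : G)) (hrq : C r * q = 0) (τ : G) :
    C ((DirectSum.decompose 𝒜 r τ : R)) * q = 0 := by
  classical
  ext n
  rw [coeff_C_mul, coeff_zero]
  have h1 : r * q.coeff n = 0 := by
    have := congrArg (fun p => p.coeff n) hrq
    simpa [coeff_C_mul] using this
  have h2 : (DirectSum.decompose 𝒜 (r * q.coeff n) (τ + 0) : R)
      = (DirectSum.decompose 𝒜 r τ : R) * q.coeff n :=
    DirectSum.coe_decompose_mul_add_of_right_mem 𝒜 (hq n)
  rw [h1] at h2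
  simpa using h2.symm

/-- If `(R,G)` is a crossed product over its support (each nonzero component
contains a unit of `R`) and `R_e` is an EM-ring, then `R` is an EM-`G`-graded ring. -/
theorem stmt_8 {G R : Type*} [AddGroup G] [DecidableEq G] [CommRing R]
    (𝒜 : G → AddSubgroup R) [GradedRing 𝒜]
    (hcross : ∀ σ : G, 𝒜 σ ≠ ⊥ → ∃ u ∈ 𝒜 σ, IsUnit u)
    (hEM : IsEMSubring ((𝒜 (0 : G) : Set R))) :
    IsEMGGraded 𝒜 := by
  classical
  intro f hf0 ⟨σ, hfσ⟩ hfzd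
  -- σ-component is nonzero since f ≠ 0
  have hσbot : 𝒜 σ ≠ ⊥ := by
    intro hbot
    apply hf0
    ext n
    have := hfσ n
    rw [hbot] at this
    simpa using this
  obtain ⟨u, hu, huunit⟩ := hcross σ hσbot
  obtain ⟨v, huv⟩ := huunit.exists_right_inv
  have hv : v ∈ 𝒜 (-σ) := inv_mem_neg_of_graded 𝒜 hu huv
  -- F = C v * f has all coefficients in 𝒜 0
  set F : R[X] := C v * f with hF
  have hFcoeff : ∀ i, F.coeff i ∈ 𝒜 (0 : G) := by
    intro i
    rw [hF, coeff_C_mul]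
    have := SetLike.mul_mem_graded hv (hfσ i)
    rwa [neg_add_cancel] at this
  -- f = C u * F
  have hfF : f = C u * F := by
    rw [hF, ← mul_assoc, ← C_mul, huv, C_1, one_mul]
  -- find an annihilator of F with coefficients in 𝒜 0
  obtain ⟨a, ha0, haf⟩ := Polynomial.notMem_nonZeroDivisors_iff.mp hfzd
  have haf' : C a * f = 0 := by rw [← smul_eq_C_mul]; exact haf
  have haF : C a * F = 0 := by
    rw [hF, ← mul_assoc, mul_comm (C a) (C v), mul_assoc, haf', mul_zero]
  -- some component of a is nonzero
  obtain ⟨τ, hτ0⟩ : ∃ τ : G, (DirectSum.decompose 𝒜 a τ : R) ≠ 0 := by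
    by_contra h
    push_neg at h
    apply ha0
    rw [← DirectSum.sum_support_decompose 𝒜 a]
    exact Finset.sum_eq_zero fun i _ => h i
  set b : R := (DirectSum.decompose 𝒜 a τ : R) with hb
  have hbF : C b * F = 0 := component_annihilates 𝒜 hFcoeff haF τ
  have hbτ : b ∈ 𝒜 τ := (DirectSum.decompose 𝒜 a τ).2
  -- get a unit in degree τ, move b to degree 0
  have hτbot : 𝒜 τ ≠ ⊥ := by
    intro hbot; apply hτ0; rw [hbot] at hbτ; simpa using hbτ
  obtain ⟨w, hw, hwunit⟩ := hcross τ hτbot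
  obtain ⟨w', hww'⟩ := hwunit.exists_right_inv
  have hw' : w' ∈ 𝒜 (-τ) := inv_mem_neg_of_graded 𝒜 hw hww'
  have hwb0 : w' * b ∈ 𝒜 (0 : G) := by
    have := SetLike.mul_mem_graded hw' hbτ
    rwa [neg_add_cancel] at this
  have hwbne : w' * b ≠ 0 := by
    intro h
    apply hτ0
    have : w * (w' * b) = 0 := by rw [h, mul_zero]
    rw [← mul_assoc, hww', one_mul] at this
    exact this
  have hwbF : C (w' * b) * F = 0 := by
    rw [C_mul, mul_assoc, hbF, mul_zero]
  -- apply the EM hypothesis to F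
  obtain ⟨c, g, hcA, hgA, ⟨d, hdA, hd0, hcd⟩, hgreg, hFcg⟩ :=
    hEM F hFcoeff ⟨C (w' * b), C_ne_zero.mpr hwbne, fun i => by
      rcases eq_or_ne i 0 with rfl | h
      · simpa using hwb0
      · rw [coeff_C, if_neg h]; exact (𝒜 (0 : G)).zero_mem, hwbF⟩
  refine ⟨u * c, g, ?_, ?_, ?_⟩
  · -- u * c is a zero divisor
    intro hreg
    apply hd0
    have : d * (u * c) = 0 := by rw [mul_comm, mul_assoc, hcd, mul_zero]
    exact hreg.2 d this
  · -- g is a regular polynomial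
    rw [Polynomial.mem_nonZeroDivisors_iff]
    intro r hr
    rw [smul_eq_C_mul] at hr
    -- each component of r annihilates g, hence is zero
    have hcomp : ∀ τ' : G, (DirectSum.decompose 𝒜 r τ' : R) = 0 := by
      intro τ'
      by_contra hne
      set s : R := (DirectSum.decompose 𝒜 r τ' : R) with hs
      have hsg : C s * g = 0 := component_annihilates 𝒜 hgA hr τ'
      have hsτ' : s ∈ 𝒜 τ' := (DirectSum.decompose 𝒜 r τ').2
      have hτ'bot : 𝒜 τ' ≠ ⊥ := by
        intro hbot; apply hne; rw [hbot] at hsτ'; simpa using hsτ'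
      obtain ⟨z, hz, hzunit⟩ := hcross τ' hτ'bot
      obtain ⟨z', hzz'⟩ := hzunit.exists_right_inv
      have hz' : z' ∈ 𝒜 (-τ') := inv_mem_neg_of_graded 𝒜 hz hzz'
      have hzs0 : z' * s ∈ 𝒜 (0 : G) := by
        have := SetLike.mul_mem_graded hz' hsτ'
        rwa [neg_add_cancel] at this
      have hzsg : C (z' * s) * g = 0 := by rw [C_mul, mul_assoc, hsg, mul_zero]
      have := hgreg (C (z' * s)) (fun i => by
        rcases eq_or_ne i 0 with rfl | h
        · simpa using hzs0
        · rw [coeff_C, if_neg h]; exact (𝒜 (0 : G)).zero_mem) hzsg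
      have hzs : z' * s = 0 := C_eq_zero.mp this
      apply hne
      have : z * (z' * s) = 0 := by rw [hzs, mul_zero]
      rw [← mul_assoc, hzz', one_mul] at this
      exact this
    rw [← DirectSum.sum_support_decompose 𝒜 r]
    exact Finset.sum_eq_zero fun i _ => hcomp i
  · rw [hfF, hFcg, ← mul_assoc, ← C_mul]
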